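/- Let G be a finite connected undirected graph with unit edge resistances and let λ be the second largest eigenvalue (in the sense of the paper: the largest absolute value among eigenvalues excluding the top eigenvalue 1) of the random-walk-normalized adjacency/transition matrix. Then for any two nodes s, t with degrees d_s, d_t and effective resistance R_{st}, the inequality λ ≥ 1 − (1/R_{st})·(1/d_s + 1/d_t) holds. -/

import Mathlib

open Matrix

/-- `f` is a unit flow from `s` to `t` on the graph `G`. -/
def IsUnitFlow {N : ℕ} (G : SimpleGraph (Fin N)) (s t : Fin N)
    (f : Fin N → Fin N → ℝ) : Prop :=
  (∀ i j, f i j = - f j i) ∧ (∀ i j, ¬ G.Adj i j → f i j = 0) ∧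
  (∀ i, ∑ j, f i j = if i = s then 1 else if i = t then -1 else 0)

/-- Energy dissipated by the flow `f` with unit resistances. -/
noncomputable def flowEnergy {N : ℕ} (f : Fin N → Fin N → ℝ) : ℝ :=
  (∑ i, ∑ j, (f i j) ^ 2) / 2

/-- Effective resistance between `s` and `t` with unit edge resistances (Thomson's
principle). -/
noncomputable def effRes {N : ℕ} (G : SimpleGraph (Fin N)) (s t : Fin N) : ENNReal :=
  ⨅ (f : Fin N → Fin N → ℝ) (_ : IsUnitFlow G s t f), ENNReal.ofReal (flowEnergy f)


namespace SecondEigAux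

variable {N : ℕ} (G : SimpleGraph (Fin N)) [DecidableRel G.Adj]

/-- adjacency indicator -/
def aE (i j : Fin N) : ℝ := if G.Adj i j then 1 else 0

lemma aE_symm (i j : Fin N) : aE G i j = aE G j i := by
  simp [aE, G.adj_comm]

lemma aE_nonneg (i j : Fin N) : 0 ≤ aE G i j := by
  unfold aE; split <;> norm_num

lemma aE_sq (i j : Fin N) : aE G i j ^ 2 = aE G i j := by
  unfold aE; split <;> norm_num

lemma aE_sum (i : Fin N) : ∑ j, aE G i j = (G.degree i : ℝ) := by
  unfold aE
  rw [Finset.sum_boole]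
  norm_cast
  rw [← SimpleGraph.neighborFinset_eq_filter]
  rfl

lemma const_of_adj (hp : G.Preconnected) (x : Fin N → ℝ)
    (h : ∀ i j, G.Adj i j → x i = x j) (i j : Fin N) : x i = x j := by
  have key : ∀ {u v : Fin N}, G.Walk u v → x u = x v := by
    intro u v w
    induction w with
    | nil => rfl
    | cons hadj _ ih => exact (h _ _ hadj).trans ih
  obtain ⟨w⟩ := hp i j
  exact key w

/-- graph Laplacian as a linear map -/
noncomputable def lapL : (Fin N → ℝ) →ₗ[ℝ] (Fin N → ℝ) where
  toFun x := fun i => (G.degree i : ℝ) * x i - ∑ j, aE G i j * x j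
  map_add' x y := by
    funext i
    simp only [Pi.add_apply, mul_add]
    rw [Finset.sum_add_distrib]
    ring
  map_smul' c x := by
    funext i
    simp only [Pi.smul_apply, smul_eq_mul, RingHom.id_apply]
    rw [show (∑ j, aE G i j * (c * x j)) = c * ∑ j, aE G i j * x j by
      rw [Finset.mul_sum]; exact Finset.sum_congr rfl fun j _ => by ring]
    ring

lemma lapL_apply (x : Fin N → ℝ) (i : Fin N) :
    lapL G x i = (G.degree i : ℝ) * x i - ∑ j, aE G i j * x j := rfl

lemma sum_lap (x : Fin N → ℝ) : ∑ i, lapL G x i = 0 := by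
  simp only [lapL_apply]
  rw [Finset.sum_sub_distrib, Finset.sum_comm (f := fun i j => aE G i j * x j)]
  have : ∀ j : Fin N, ∑ i, aE G i j * x j = (G.degree j : ℝ) * x j := by
    intro j
    rw [← Finset.sum_mul]
    congr 1
    rw [show (∑ i, aE G i j) = ∑ i, aE G j i from
      Finset.sum_congr rfl fun i _ => aE_symm G i j, aE_sum]
  rw [Finset.sum_congr rfl fun j _ => this j]
  ring

lemma quad (x : Fin N → ℝ) :
    ∑ i, ∑ j, aE G i j * (x i - x j) ^ 2
      = 2 * (∑ i, (G.degree i : ℝ) * x i ^ 2) - 2 * ∑ i, ∑ j, aE G i j * (x i * x j) := by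
  have hA : ∑ i, ∑ j, aE G i j * x i ^ 2 = ∑ i, (G.degree i : ℝ) * x i ^ 2 :=
    Finset.sum_congr rfl fun i _ => by rw [← Finset.sum_mul, aE_sum]
  have hB : ∑ i, ∑ j, aE G i j * x j ^ 2 = ∑ i, (G.degree i : ℝ) * x i ^ 2 := by
    rw [Finset.sum_comm]
    refine Finset.sum_congr rfl fun j _ => ?_
    rw [← Finset.sum_mul]
    congr 1
    rw [show (∑ i, aE G i j) = ∑ i, aE G j i from
      Finset.sum_congr rfl fun i _ => aE_symm G i j, aE_sum]
  have hexp : ∀ i j, aE G i j * (x i - x j) ^ 2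
      = aE G i j * x i ^ 2 - 2 * (aE G i j * (x i * x j)) + aE G i j * x j ^ 2 := by
    intro i j; ring
  calc ∑ i, ∑ j, aE G i j * (x i - x j) ^ 2
      = ∑ i, ∑ j, (aE G i j * x i ^ 2 - 2 * (aE G i j * (x i * x j)) + aE G i j * x j ^ 2) := by
        exact Finset.sum_congr rfl fun i _ => Finset.sum_congr rfl fun j _ => hexp i j
    _ = (∑ i, ∑ j, aE G i j * x i ^ 2) - 2 * (∑ i, ∑ j, aE G i j * (x i * x j))
          + ∑ i, ∑ j, aE G i j * x j ^ 2 := by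
        simp only [Finset.sum_add_distrib, Finset.sum_sub_distrib, Finset.mul_sum]
    _ = _ := by rw [hA, hB]; ring

lemma sum_mul_lap (x : Fin N → ℝ) :
    ∑ i, x i * lapL G x i = (∑ i, ∑ j, aE G i j * (x i - x j) ^ 2) / 2 := by
  have h1 : ∑ i, x i * lapL G x i
      = (∑ i, (G.degree i : ℝ) * x i ^ 2) - ∑ i, ∑ j, aE G i j * (x i * x j) := by
    simp only [lapL_apply, mul_sub]
    rw [Finset.sum_sub_distrib]
    congr 1
    · exact Finset.sum_congr rfl fun i _ => by ring
    · refine Finset.sum_congr rfl fun i _ => ?_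
      rw [Finset.mul_sum]
      exact Finset.sum_congr rfl fun j _ => by ring
  rw [h1, quad G x]
  ring

lemma adj_eq_of_quad_zero (x : Fin N → ℝ)
    (h : ∑ i, ∑ j, aE G i j * (x i - x j) ^ 2 = 0) :
    ∀ i j, G.Adj i j → x i = x j := by
  have h1 : ∀ i ∈ Finset.univ (α := Fin N), ∑ j, aE G i j * (x i - x j) ^ 2 = 0 :=
    (Finset.sum_eq_zero_iff_of_nonneg (fun i _ =>
      Finset.sum_nonneg fun j _ => mul_nonneg (aE_nonneg G i j) (sq_nonneg _))).1 h
  intro i j hij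
  have h2 := (Finset.sum_eq_zero_iff_of_nonneg
    (fun j _ => mul_nonneg (aE_nonneg G i j) (sq_nonneg _))).1 (h1 i (Finset.mem_univ i)) j
    (Finset.mem_univ j)
  rw [show aE G i j = 1 by simp [aE, hij], one_mul] at h2
  have := sq_eq_zero_iff.1 h2
  linarith [this]

lemma lap_ker (hp : G.Preconnected) (x : Fin N → ℝ) (hx : lapL G x = 0) :
    ∀ i j, x i = x j := by
  have h0 : ∑ i, x i * lapL G x i = 0 := by
    rw [hx]; simp
  rw [sum_mul_lap] at h0
  exact const_of_adj G hp x (adj_eq_of_quad_zero G x (by linarith)) 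

lemma lap_surj (hconn : G.Connected) (v : Fin N → ℝ) (hv : ∑ i, v i = 0) :
    ∃ φ, lapL G φ = v := by
  have hne : Nonempty (Fin N) := hconn.nonempty
  obtain ⟨i0⟩ := hne
  -- the sum functional
  let T : (Fin N → ℝ) →ₗ[ℝ] ℝ :=
    { toFun := fun x => ∑ i, x i
      map_add' := fun x y => Finset.sum_add_distrib
      map_smul' := fun c x => by simp [Finset.mul_sum] }
  have hone : (fun _ : Fin N => (1:ℝ)) ≠ 0 := by
    intro h
    have := congrFun h i0
    norm_num at this
  have hker : LinearMap.ker (lapL G) = Submodule.span ℝ {fun _ : Fin N => (1:ℝ)} := by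
    apply le_antisymm
    · intro x hx
      have hx' : lapL G x = 0 := hx
      have hc := lap_ker G hconn.preconnected x hx'
      rw [Submodule.mem_span_singleton]
      exact ⟨x i0, by funext j; simp [hc i0 j]⟩
    · rw [Submodule.span_le, Set.singleton_subset_iff]
      show lapL G (fun _ => 1) = 0
      funext i
      simp [lapL_apply, aE_sum]
  have hkerrank : Module.finrank ℝ (LinearMap.ker (lapL G)) = 1 := by
    rw [hker]
    exact finrank_span_singleton hone
  have hrangerank : Module.finrank ℝ (LinearMap.range (lapL G)) = N - 1 := by
    have := LinearMap.finrank_range_add_finrank_ker (lapL G)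
    rw [hkerrank, Module.finrank_fin_fun] at this
    omega
  have hTsurj : LinearMap.range T = ⊤ := by
    rw [LinearMap.range_eq_top]
    intro c
    refine ⟨fun _ => c / N, ?_⟩
    have hN : (N : ℝ) ≠ 0 := by
      have : 0 < N := Fin.pos i0
      positivity
    show ∑ _i : Fin N, c / N = c
    rw [Finset.sum_const, Finset.card_univ, Fintype.card_fin, nsmul_eq_mul]
    field_simp
  have hTker : Module.finrank ℝ (LinearMap.ker T) = N - 1 := by
    have := LinearMap.finrank_range_add_finrank_ker T
    rw [hTsurj, Module.finrank_fin_fun] at this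
    simp only [finrank_top, Module.finrank_self] at this
    omega
  have hle : LinearMap.range (lapL G) ≤ LinearMap.ker T := by
    rintro y ⟨x, rfl⟩
    show ∑ i, lapL G x i = 0
    exact sum_lap G x
  have heq : LinearMap.range (lapL G) = LinearMap.ker T :=
    Submodule.eq_of_le_of_finrank_eq hle (by rw [hrangerank, hTker])
  have hvmem : v ∈ LinearMap.ker T := hv
  rw [← heq] at hvmem
  exact hvmem

lemma helper1 (x y A u w : ℝ) (hx : x ≠ 0) (hy : y ≠ 0) :
    (x * u) * (A / (x * y) * (y * w)) = A * (u * w) := by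
  field_simp

lemma helper2 (x y A B : ℝ) (hx : x ≠ 0) (hy : y ≠ 0) :
    A * (B / y) = x * (A / (x * y) * B) := by
  field_simp

lemma helper3 (x B : ℝ) (hx : x ≠ 0) : x * x * (B / x) - x * B = 0 := by
  field_simp
  ring

lemma helper4 (x y A B : ℝ) (hx : x ≠ 0) (hy : y ≠ 0) :
    A / (x * x) * (B / y) = 1 / x * (A / (x * y) * B) := by
  rw [div_mul_div_comm, div_mul_eq_mul_div, one_mul, div_mul_eq_mul_div, div_div]
  ring

end SecondEigAux

open SecondEigAux Finset

set_option maxHeartbeats 1600000 in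
/-- For a connected graph with unit resistances, the largest absolute value `λ` among
non-top eigenvalues of the transition matrix `P = D⁻¹A` satisfies
`λ ≥ 1 - (1/R_{st})(1/d_s + 1/d_t)`. -/
theorem second_eigenvalue_resistance_bound {N : ℕ} (G : SimpleGraph (Fin N))
    [DecidableRel G.Adj] (hconn : G.Connected) (s t : Fin N) (hst : s ≠ t)
    (lam : ℝ)
    (hlam : IsGreatest {x : ℝ | ∃ μ : ℝ, μ ≠ 1 ∧ x = |μ| ∧
        Module.End.HasEigenvalue
          (Matrix.toLin'
            (Matrix.of fun i j => (if G.Adj i j then (1 : ℝ) else 0) / (G.degree i))) μ}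
      lam) :
    1 - (1 / (effRes G s t).toReal) * (1 / (G.degree s : ℝ) + 1 / (G.degree t : ℝ)) ≤
      lam := by
  classical
  -- degrees are positive
  have hdpos : ∀ i, (0 : ℝ) < (G.degree i : ℝ) := by
    intro i
    have hadj : ∃ w, G.Adj i w := by
      have hne2 : ∃ u : Fin N, u ≠ i := by
        rcases eq_or_ne s i with rfl | h
        · exact ⟨t, fun h' => hst h'.symm⟩
        · exact ⟨s, h⟩
      obtain ⟨u, hu⟩ := hne2
      obtain ⟨w⟩ := hconn.preconnected i u
      cases w with
      | nil => exact absurd rfl hu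
      | cons h p => exact ⟨_, h⟩
    exact_mod_cast (G.degree_pos_iff_exists_adj i).2 hadj
  set si : Fin N → ℝ := fun i => Real.sqrt (G.degree i) with hsi_def
  have hsipos : ∀ i, 0 < si i := fun i => Real.sqrt_pos.2 (hdpos i)
  have hsine : ∀ i, si i ≠ 0 := fun i => (hsipos i).ne'
  have hsisq : ∀ i, si i * si i = (G.degree i : ℝ) := fun i =>
    Real.mul_self_sqrt (hdpos i).le
  -- the source-sink vector
  set v : Fin N → ℝ := fun i => (if i = s then (1:ℝ) else 0) - (if i = t then 1 else 0)
    with hv_def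
  have hv_eq : ∀ i, v i = if i = s then 1 else if i = t then -1 else 0 := by
    intro i
    by_cases h1 : i = s <;> by_cases h2 : i = t
    · exact absurd (h1 ▸ h2) hst
    · simp [v, h1, h2, hst]
    · simp [v, h1, h2, hst, (Ne.symm hst : t ≠ s)]
    · simp [v, h1, h2, hst]
  have hv_sum : ∑ i, v i = 0 := by
    simp [v, Finset.sum_sub_distrib]
  -- the potential
  obtain ⟨φ, hφ⟩ := lap_surj G hconn v hv_sum
  set R : ℝ := φ s - φ t with hR_def
  have hsum_ite : ∀ (y : Fin N → ℝ), ∑ i, y i * v i = y s - y t := by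
    intro y
    simp [v, mul_sub, Finset.sum_sub_distrib, mul_ite, mul_one, mul_zero]
  have hEn : ∑ i, ∑ j, aE G i j * (φ i - φ j) ^ 2 = 2 * R := by
    have h1 := sum_mul_lap G φ
    rw [hφ, hsum_ite φ] at h1
    rw [← hR_def] at h1
    linarith
  have hEnn : (0:ℝ) ≤ ∑ i, ∑ j, aE G i j * (φ i - φ j) ^ 2 :=
    Finset.sum_nonneg fun i _ =>
      Finset.sum_nonneg fun j _ => mul_nonneg (aE_nonneg G i j) (sq_nonneg _)
  have hRpos : 0 < R := by
    rcases lt_or_eq_of_le (by linarith : (0:ℝ) ≤ R) with h | h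
    · exact h
    · exfalso
      have hadje : ∀ i j, G.Adj i j → φ i = φ j :=
        adj_eq_of_quad_zero G φ (by linarith)
      have hvs : v s = 0 := by
        rw [← hφ]
        show (G.degree s : ℝ) * φ s - ∑ j, aE G s j * φ j = 0
        rw [← aE_sum G s, Finset.sum_mul, ← Finset.sum_sub_distrib]
        apply Finset.sum_eq_zero
        intro j _
        by_cases hadj : G.Adj s j
        · rw [hadje s j hadj]; ring
        · simp [aE, hadj]
      rw [hv_eq s] at hvs
      simp at hvs
  -- the harmonic unit flow
  set f0 : Fin N → Fin N → ℝ := fun i j => aE G i j * (φ i - φ j) with hf0_def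
  have hf0flow : IsUnitFlow G s t f0 := by
    refine ⟨fun i j => by rw [hf0_def]; simp only; rw [aE_symm]; ring,
      fun i j h => by simp [hf0_def, aE, h], fun i => ?_⟩
    have h1 : ∑ j, f0 i j = lapL G φ i := by
      show (∑ j, aE G i j * (φ i - φ j)) = _
      rw [lapL_apply, ← aE_sum G i, Finset.sum_mul, ← Finset.sum_sub_distrib]
      exact Finset.sum_congr rfl fun j _ => by ring
    rw [h1, hφ, hv_eq]
  have hf0energy : flowEnergy f0 = R := by
    unfold flowEnergy
    have : ∀ i j : Fin N, f0 i j ^ 2 = aE G i j * (φ i - φ j) ^ 2 := by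
      intro i j
      rw [hf0_def]
      simp only
      rw [mul_pow, aE_sq]
    rw [Finset.sum_congr rfl fun i _ => Finset.sum_congr rfl fun j _ => this i j, hEn]
    ring
  -- lower bound for arbitrary unit flows
  have hlow : ∀ f, IsUnitFlow G s t f → R ≤ flowEnergy f := by
    intro f hf
    obtain ⟨hanti, hsupp, hdiv⟩ := hf
    have hdiv' : ∀ i, ∑ j, f i j = v i := fun i => by rw [hdiv, hv_eq]
    have hA : ∑ i, ∑ j, f i j * φ i = R := by
      rw [show (∑ i, ∑ j, f i j * φ i) = ∑ i, φ i * v i from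
        Finset.sum_congr rfl fun i _ => by
          rw [← Finset.sum_mul, hdiv' i]; ring, hsum_ite]
    have hB : ∑ i, ∑ j, f i j * φ j = -R := by
      rw [Finset.sum_comm]
      have : ∀ j : Fin N, ∑ i, f i j * φ j = -(φ j * v j) := by
        intro j
        rw [← Finset.sum_mul]
        rw [show (∑ i, f i j) = -∑ i, f j i by
          rw [← Finset.sum_neg_distrib]
          exact Finset.sum_congr rfl fun i _ => by rw [hanti i j]]
        rw [hdiv' j]; ring
      rw [Finset.sum_congr rfl fun j _ => this j, Finset.sum_neg_distrib, hsum_ite]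
    have h1 : ∑ i, ∑ j, f i j * (φ i - φ j) = 2 * R := by
      have : ∀ i j : Fin N, f i j * (φ i - φ j) = f i j * φ i - f i j * φ j := by
        intro i j; ring
      rw [Finset.sum_congr rfl fun i _ => Finset.sum_congr rfl fun j _ => this i j]
      simp only [Finset.sum_sub_distrib]
      rw [hA, hB]; ring
    have h2 : ∀ i j : Fin N, f i j * (φ i - φ j) = f i j * (aE G i j * (φ i - φ j)) := by
      intro i j
      by_cases hadj : G.Adj i j
      · simp [aE, hadj]
      · simp [hsupp i j hadj]
    have hcs := Finset.sum_mul_sq_le_sq_mul_sq Finset.univ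
      (fun p : Fin N × Fin N => f p.1 p.2)
      (fun p : Fin N × Fin N => aE G p.1 p.2 * (φ p.1 - φ p.2))
    simp only [Fintype.sum_prod_type] at hcs
    rw [show (∑ i, ∑ j, f i j * (aE G i j * (φ i - φ j))) = 2 * R by
      rw [← h1]; exact Finset.sum_congr rfl fun i _ => Finset.sum_congr rfl
        fun j _ => (h2 i j).symm] at hcs
    rw [show (∑ i, ∑ j, (aE G i j * (φ i - φ j)) ^ 2)
        = ∑ i, ∑ j, aE G i j * (φ i - φ j) ^ 2 from Finset.sum_congr rfl fun i _ =>
          Finset.sum_congr rfl fun j _ => by rw [mul_pow, aE_sq], hEn] at hcs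
    have hFnn : (0:ℝ) ≤ ∑ i, ∑ j, f i j ^ 2 :=
      Finset.sum_nonneg fun i _ => Finset.sum_nonneg fun j _ => sq_nonneg _
    unfold flowEnergy
    nlinarith [hcs, hRpos, hFnn]
  -- effective resistance equals R
  have heff : effRes G s t = ENNReal.ofReal R := by
    apply le_antisymm
    · calc effRes G s t ≤ ENNReal.ofReal (flowEnergy f0) := iInf₂_le f0 hf0flow
        _ = ENNReal.ofReal R := by rw [hf0energy]
    · exact le_iInf₂ fun f hf => ENNReal.ofReal_le_ofReal (hlow f hf)
  have hRtR : (effRes G s t).toReal = R := by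
    rw [heff, ENNReal.toReal_ofReal hRpos.le]
  rw [hRtR]
  -- centered potential
  set D : ℝ := ∑ i, (G.degree i : ℝ) with hD
  have hDpos : 0 < D := Finset.sum_pos (fun i _ => hdpos i) ⟨s, Finset.mem_univ s⟩
  set c : ℝ := (∑ i, (G.degree i : ℝ) * φ i) / D with hc
  set f : Fin N → ℝ := fun i => φ i - c with hfdef
  have hmean : ∑ i, (G.degree i : ℝ) * f i = 0 := by
    have h1 : ∑ i, (G.degree i : ℝ) * f i
        = (∑ i, (G.degree i : ℝ) * φ i) - D * c := by
      simp only [hfdef, mul_sub]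
      rw [Finset.sum_sub_distrib, ← Finset.sum_mul, hD]
    rw [h1, hc]
    field_simp
    ring
  set Q : ℝ := ∑ i, (G.degree i : ℝ) * f i ^ 2 with hQ
  have hfst : f s - f t = R := by simp only [hfdef]; rw [hR_def]; ring
  set σ : ℝ := 1 / (G.degree s : ℝ) + 1 / (G.degree t : ℝ) with hσ
  have hσpos : 0 < σ := by
    have h1 := hdpos s; have h2 := hdpos t
    rw [hσ]; positivity
  have hstQ : (G.degree s : ℝ) * f s ^ 2 + (G.degree t : ℝ) * f t ^ 2 ≤ Q := by
    rw [hQ]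
    rw [show (G.degree s : ℝ) * f s ^ 2 + (G.degree t : ℝ) * f t ^ 2
        = ∑ i ∈ ({s, t} : Finset (Fin N)), (G.degree i : ℝ) * f i ^ 2 by
      rw [Finset.sum_pair hst]]
    exact Finset.sum_le_sum_of_subset_of_nonneg (Finset.subset_univ _)
      (fun i _ _ => by positivity)
  have key : (G.degree s : ℝ) * (G.degree t : ℝ) * R ^ 2
      ≤ ((G.degree s : ℝ) + (G.degree t : ℝ))
        * ((G.degree s : ℝ) * f s ^ 2 + (G.degree t : ℝ) * f t ^ 2) := by
    rw [← hfst]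
    nlinarith [sq_nonneg ((G.degree s : ℝ) * f s + (G.degree t : ℝ) * f t)]
  have hQlb : R ^ 2 ≤ σ * Q := by
    have h2 : σ = ((G.degree t : ℝ) + (G.degree s : ℝ))
        / ((G.degree s : ℝ) * (G.degree t : ℝ)) := by
      rw [hσ, div_add_div _ _ (hdpos s).ne' (hdpos t).ne', one_mul, mul_one]
    have h3 : R ^ 2 ≤ σ * ((G.degree s : ℝ) * f s ^ 2 + (G.degree t : ℝ) * f t ^ 2) := by
      rw [h2, div_mul_eq_mul_div, le_div_iff₀ (mul_pos (hdpos s) (hdpos t))]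
      nlinarith [key]
    calc R ^ 2 ≤ σ * ((G.degree s : ℝ) * f s ^ 2 + (G.degree t : ℝ) * f t ^ 2) := h3
      _ ≤ σ * Q := mul_le_mul_of_nonneg_left hstQ hσpos.le
  have hQpos : 0 < Q := by nlinarith [hQlb, hσpos, pow_pos hRpos 2]
  -- the symmetrized matrix
  set S : Matrix (Fin N) (Fin N) ℝ :=
    Matrix.of (fun i j => aE G i j / (si i * si j)) with hSdef
  have hS : S.IsHermitian := by
    unfold Matrix.IsHermitian
    ext i j
    simp only [conjTranspose_apply, hSdef, Matrix.of_apply, star_trivial]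
    rw [aE_symm]
    ring_nf
  set B := hS.eigenvectorBasis with hB
  set μ := hS.eigenvalues with hμ
  have hSB : ∀ k, S *ᵥ ⇑(B k) = μ k • ⇑(B k) := fun k => hS.mulVec_eigenvectorBasis k
  set g : EuclideanSpace ℝ (Fin N) := WithLp.toLp 2 (fun i => si i * f i : Fin N → ℝ) with hg
  have hg_app : ∀ i, g i = si i * f i := fun i => rfl
  set r : Fin N → ℝ := fun k => B.repr g k with hr
  have hg_repr : g = ∑ k, r k • B k := (B.sum_repr g).symm
  have horm := B.orthonormal
  have hinner_gg : (inner ℝ g g : ℝ) = ∑ k, r k ^ 2 := by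
    rw [hg_repr, horm.inner_sum]
    exact Finset.sum_congr rfl fun k _ => by
      rw [starRingEnd_apply, star_trivial]; ring
  have hinner_Q : (inner ℝ g g : ℝ) = Q := by
    rw [PiLp.inner_apply, hQ]
    refine Finset.sum_congr rfl fun i _ => ?_
    simp only [RCLike.inner_apply', starRingEnd_apply, star_trivial]
    rw [hg_app i, ← hsisq i]
    ring
  set T : EuclideanSpace ℝ (Fin N) →ₗ[ℝ] EuclideanSpace ℝ (Fin N) :=
    Matrix.toEuclideanLin S with hT
  have hTB : ∀ k, T (B k) = μ k • B k := by
    intro k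
    rw [hT, Matrix.toEuclideanLin_apply]
    show (WithLp.equiv 2 (Fin N → ℝ)).symm (S *ᵥ ⇑(B k)) = μ k • B k
    rw [hSB k]
    rfl
  have hTg_coord : ∀ i, T g i = ∑ j, S i j * g j := fun i => rfl
  have hTg : T g = ∑ k, (r k * μ k) • B k := by
    conv_lhs => rw [hg_repr]
    rw [map_sum]
    refine Finset.sum_congr rfl fun k _ => ?_
    rw [_root_.map_smul, hTB k, smul_smul]
  have hinner_Tg : (inner ℝ g (T g) : ℝ) = ∑ k, μ k * r k ^ 2 := by
    rw [hTg, hg_repr, horm.inner_sum]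
    exact Finset.sum_congr rfl fun k _ => by
      rw [starRingEnd_apply, star_trivial]; ring
  have hinner_Tg2 : (inner ℝ g (T g) : ℝ) = ∑ i, ∑ j, aE G i j * (f i * f j) := by
    rw [PiLp.inner_apply]
    simp only [RCLike.inner_apply', starRingEnd_apply, star_trivial]
    refine Finset.sum_congr rfl fun i _ => ?_
    rw [hTg_coord i, Finset.mul_sum]
    refine Finset.sum_congr rfl fun j _ => ?_
    rw [hg_app i, hg_app j]
    exact helper1 (si i) (si j) (aE G i j) (f i) (f j) (hsine i) (hsine j)
  have horth : ∀ k, μ k = 1 → r k = 0 := by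
    intro k hk1
    have hw := hSB k
    rw [hk1, one_smul] at hw
    set x : Fin N → ℝ := fun i => B k i / si i with hx
    have hlx : lapL G x = 0 := by
      funext i
      have hrow := congrFun hw i
      have hmv : (S *ᵥ ⇑(B k)) i = ∑ j, S i j * B k j := rfl
      rw [hmv] at hrow
      rw [lapL_apply]
      show (G.degree i : ℝ) * x i - ∑ j, aE G i j * x j = (0 : (Fin N → ℝ)) i
      have h2 : ∑ j, aE G i j * x j = si i * ∑ j, S i j * B k j := by
        rw [Finset.mul_sum]
        refine Finset.sum_congr rfl fun j _ => ?_
        exact helper2 (si i) (si j) (aE G i j) (B k j) (hsine i) (hsine j)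
      rw [h2, hrow]
      show (G.degree i : ℝ) * (B k i / si i) - si i * B k i = 0
      rw [← hsisq i]
      exact helper3 (si i) (B k i) (hsine i)
    have hxc := lap_ker G hconn.preconnected x hlx
    have hrk : r k = ∑ i, B k i * g i := by
      rw [hr]
      show B.repr g k = _
      rw [B.repr_apply_apply, PiLp.inner_apply]
      simp only [RCLike.inner_apply', starRingEnd_apply, star_trivial]
    rw [hrk]
    have hterm : ∀ i, B k i * g i = x s * ((G.degree i : ℝ) * f i) := by
      intro i
      have hBi : B k i = x i * si i := by
        show B k i = B k i / si i * si i
        exact (div_mul_cancel₀ (B k i) (hsine i)).symm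
      rw [hBi, hxc i s, hg_app i, ← hsisq i]
      ring
    rw [Finset.sum_congr rfl fun i _ => hterm i, ← Finset.mul_sum, hmean, mul_zero]
  have hsum1 : ∑ k, r k ^ 2 = Q := by rw [← hinner_gg, hinner_Q]
  have hEnf : ∑ i, ∑ j, aE G i j * (f i - f j) ^ 2 = 2 * R := by
    rw [← hEn]
    refine Finset.sum_congr rfl fun i _ => Finset.sum_congr rfl fun j _ => ?_
    rw [show f i - f j = φ i - φ j by simp only [hfdef]; ring]
  have hsum2 : ∑ k, μ k * r k ^ 2 = Q - R := by
    rw [← hinner_Tg, hinner_Tg2]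
    have hq := quad G f
    rw [hEnf] at hq
    have hQ' : Q = ∑ i, (G.degree i : ℝ) * f i ^ 2 := hQ
    linarith
  have hex_r : ∃ k, r k ≠ 0 := by
    by_contra hcon
    push_neg at hcon
    have h0 : ∑ k, r k ^ 2 = 0 := Finset.sum_eq_zero fun k _ => by rw [hcon k]; ring
    rw [hsum1] at h0
    exact hQpos.ne' h0
  obtain ⟨k0, hk0⟩ := hex_r
  have hexists : ∃ k, μ k ≠ 1 ∧ 1 - 1 / R * σ ≤ μ k := by
    by_contra hcon
    push_neg at hcon
    have hterm : ∀ k ∈ Finset.univ (α := Fin N),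
        μ k * r k ^ 2 ≤ (1 - 1 / R * σ) * r k ^ 2 := by
      intro k _
      rcases eq_or_ne (r k) 0 with h | h
      · rw [h]; ring_nf; exact le_refl _
      · have hkne : μ k ≠ 1 := fun h1 => h (horth k h1)
        have hlt := hcon k hkne
        have hp : (0:ℝ) < r k ^ 2 := by positivity
        nlinarith
    have hkne0 : μ k0 ≠ 1 := fun h1 => hk0 (horth k0 h1)
    have hstrict : μ k0 * r k0 ^ 2 < (1 - 1 / R * σ) * r k0 ^ 2 := by
      have hlt := hcon k0 hkne0
      have hp : (0:ℝ) < r k0 ^ 2 := by positivity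
      nlinarith
    have hsumlt : ∑ k, μ k * r k ^ 2 < ∑ k, (1 - 1 / R * σ) * r k ^ 2 :=
      Finset.sum_lt_sum hterm ⟨k0, Finset.mem_univ _, hstrict⟩
    rw [hsum2, ← Finset.mul_sum, hsum1] at hsumlt
    have h5 : 1 / R * σ * Q < R := by nlinarith
    have h6 : σ * Q < R ^ 2 := by
      have := mul_lt_mul_of_pos_left h5 hRpos
      rw [show R * (1 / R * σ * Q) = σ * Q by field_simp] at this
      nlinarith
    linarith [hQlb]
  obtain ⟨k, hk1, hk2⟩ := hexists
  have hBne : ∃ i, B k i ≠ 0 := by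
    by_contra hcon
    push_neg at hcon
    have hn := horm.1 k
    have h1 : (inner ℝ (B k) (B k) : ℝ) = 1 := by
      rw [real_inner_self_eq_norm_sq, hn]
      norm_num
    rw [PiLp.inner_apply] at h1
    simp only [RCLike.inner_apply', starRingEnd_apply, star_trivial] at h1
    rw [Finset.sum_eq_zero fun i _ => by rw [hcon i]; ring] at h1
    norm_num at h1
  obtain ⟨i0, hi0⟩ := hBne
  set w : Fin N → ℝ := fun i => B k i / si i with hwdef
  have hwne : w ≠ 0 := by
    intro h
    apply hi0
    have h1 := congrFun h i0
    have h2 : B k i0 / si i0 = 0 := h1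
    rcases div_eq_zero_iff.1 h2 with h3 | h3
    · exact h3
    · exact absurd h3 (hsine i0)
  have heig : Matrix.toLin'
      (Matrix.of fun i j => (if G.Adj i j then (1 : ℝ) else 0) / (G.degree i)) w
      = μ k • w := by
    rw [Matrix.toLin'_apply]
    funext i
    have hrow := congrFun (hSB k) i
    have hmv : (S *ᵥ ⇑(B k)) i = ∑ j, S i j * B k j := rfl
    rw [hmv] at hrow
    simp only [Pi.smul_apply, smul_eq_mul] at hrow
    show ∑ j, aE G i j / (G.degree i : ℝ) * w j = (μ k • w) i
    have hlhs : ∑ j, aE G i j / (G.degree i : ℝ) * w j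
        = (1 / si i) * ∑ j, S i j * B k j := by
      rw [Finset.mul_sum]
      refine Finset.sum_congr rfl fun j _ => ?_
      show aE G i j / (G.degree i : ℝ) * (B k j / si j)
          = 1 / si i * (aE G i j / (si i * si j) * B k j)
      rw [← hsisq i]
      exact helper4 (si i) (si j) (aE G i j) (B k j) (hsine i) (hsine j)
    rw [hlhs, hrow]
    show 1 / si i * (μ k * B k i) = μ k * (B k i / si i)
    rw [div_eq_mul_inv, div_eq_mul_inv]
    ring
  have heigval : Module.End.HasEigenvalue
      (Matrix.toLin'
        (Matrix.of fun i j => (if G.Adj i j then (1 : ℝ) else 0) / (G.degree i))) (μ k) :=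
    Module.End.hasEigenvalue_of_hasEigenvector
      ⟨Module.End.mem_eigenspace_iff.2 heig, hwne⟩
  have habs : |μ k| ≤ lam := hlam.2 ⟨μ k, hk1, rfl, heigval⟩
  calc 1 - 1 / R * σ ≤ μ k := hk2
    _ ≤ |μ k| := le_abs_self _
    _ ≤ lam := habs
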